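/- Let f : ℝⁿ → ℝ ∪ {+∞} be a radial function at p, i.e., f = h(‖· − p‖) for some h : [0,∞) → ℝ ∪ {+∞}. Then its p-based Fenchel conjugate is also radial: f*_p(y) = h*(‖y − p‖), where h*(s) = sup_{t ≥ 0} (s·t − h(t)). -/

import Mathlib

noncomputable def fconj {n : ℕ} (f : EuclideanSpace ℝ (Fin n) → EReal)
    (p y : EuclideanSpace ℝ (Fin n)) : EReal :=
  ⨆ z, (((inner ℝ (y - p) (z - p) : ℝ) : EReal) - f z)

/-- One-dimensional conjugate restricted to `[0, ∞)`. -/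
noncomputable def hconj (h : ℝ → EReal) (s : ℝ) : EReal :=
  ⨆ t : ℝ, ⨆ _ : 0 ≤ t, (((s * t : ℝ) : EReal) - h t)

theorem radial_conjugate {n : ℕ} (hn : 0 < n) (h : ℝ → EReal)
    (p : EuclideanSpace ℝ (Fin n)) :
    ∀ y, fconj (fun x => h ‖x - p‖) p y = hconj h ‖y - p‖ := by
  intro y
  set s := ‖y - p‖ with hs
  obtain ⟨u, hu1, hu2⟩ : ∃ u : EuclideanSpace ℝ (Fin n), ‖u‖ = 1 ∧ (inner ℝ (y - p) u : ℝ) = s := by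
    by_cases hy : y = p
    · refine ⟨EuclideanSpace.single ⟨0, hn⟩ (1:ℝ), ?_, ?_⟩
      · simp
      · simp [hy, hs]
    · have hsne : s ≠ 0 := by simp [hs, sub_eq_zero, hy]
      refine ⟨s⁻¹ • (y - p), ?_, ?_⟩
      · rw [norm_smul, ← hs, Real.norm_eq_abs, abs_of_nonneg (inv_nonneg.2 (norm_nonneg (y-p)))]
        field_simp
        exact div_self hsne
      · rw [real_inner_smul_right, real_inner_self_eq_norm_sq, ← hs]
        field_simp
  simp only [fconj, hconj]
  apply le_antisymm
  · refine iSup_le fun z => ?_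
    refine le_trans ?_
      (le_iSup₂ (f := fun t (_ : (0:ℝ) ≤ t) => (((s * t : ℝ) : EReal) - h t)) ‖z - p‖
        (norm_nonneg _))
    apply EReal.sub_le_sub _ le_rfl
    exact_mod_cast real_inner_le_norm (y - p) (z - p)
  · refine iSup₂_le fun t ht => ?_
    have hz : ‖(p + t • u) - p‖ = t := by
      rw [add_sub_cancel_left, norm_smul, hu1, Real.norm_eq_abs, abs_of_nonneg ht, mul_one]
    refine le_trans ?_ (le_iSup _ (p + t • u))
    rw [hz, add_sub_cancel_left, real_inner_smul_right, hu2, mul_comm]
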